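/- Let K be a nonempty finite type and, for each κ ∈ K, let I κ and J κ be nonempty finite types; set Ω = Σ κ, (I κ × J κ). Let ρ : Matrix Ω Ω ℂ be positive semidefinite with trace 1. Then ρ is block-separable if and only if both: (a) ρ is block diagonal, i.e. ρ (⟨κ,a⟩, ⟨κ',b⟩) = 0 whenever κ ≠ κ'; and (b) for each κ with p_κ := ∑_{a ∈ I κ × J κ} ρ (⟨κ,a⟩, ⟨κ,a⟩) ≠ 0, the normalized diagonal block ρ_κ : Matrix (I κ × J κ) (I κ × J κ) ℂ, ρ_κ (a, b) = ρ (⟨κ,a⟩, ⟨κ,b⟩) / p_κ, is a finite convex combination ∑_t λ_t (A_t ⊗ₖ B_t) of Kronecker products of positive semidefinite trace-1 matrices A_t on I κ and B_t on J κ. -/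

import Mathlib

open scoped BigOperators ComplexOrder Kronecker

/-- A matrix on `Ω = Σ κ, I κ × J κ` is block-separable if it is a finite convex
combination of rank-one projections onto unit vectors each supported in a single
block and there of product form. -/
def BlockSep {K : Type*} [Fintype K] {I J : K → Type*}
    [∀ κ, Fintype (I κ)] [∀ κ, Fintype (J κ)]
    (ρ : Matrix ((κ : K) × (I κ × J κ)) ((κ : K) × (I κ × J κ)) ℂ) : Prop :=
  ∃ (n : ℕ) (lam : Fin n → ℝ) (v : Fin n → ((κ : K) × (I κ × J κ)) → ℂ),
    (∀ t, 0 ≤ lam t) ∧ (∑ t, lam t = 1) ∧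
    (∀ t, ∑ a, Complex.normSq (v t a) = 1) ∧
    (∀ t, ∃ (κ : K) (x : I κ → ℂ) (y : J κ → ℂ),
      (∀ (i : I κ) (j : J κ), v t ⟨κ, (i, j)⟩ = x i * y j) ∧
      (∀ κ' : K, κ' ≠ κ → ∀ b : I κ' × J κ', v t ⟨κ', b⟩ = 0)) ∧
    ρ = ∑ t, (lam t : ℂ) • Matrix.of (fun a b => v t a * starRingEnd ℂ (v t b))

/-- A matrix on `I × J` is Kronecker-separable if it is a finite convex combination
of Kronecker products of positive semidefinite trace-one matrices. -/
def KronSep {I J : Type*} [Fintype I] [Fintype J]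
    (ρ : Matrix (I × J) (I × J) ℂ) : Prop :=
  ∃ (n : ℕ) (lam : Fin n → ℝ)
    (A : Fin n → Matrix I I ℂ) (B : Fin n → Matrix J J ℂ),
    (∀ t, 0 ≤ lam t) ∧ (∑ t, lam t = 1) ∧
    (∀ t, (A t).PosSemidef ∧ (A t).trace = 1) ∧
    (∀ t, (B t).PosSemidef ∧ (B t).trace = 1) ∧
    ρ = ∑ t, (lam t : ℂ) • (A t ⊗ₖ B t)

namespace BlockSepAux

open Matrix Complex

variable {n : Type*} [Fintype n]

/-- Outer product (rank-one) matrix of a vector. -/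
noncomputable def outer (x : n → ℂ) : Matrix n n ℂ :=
  Matrix.of fun i j => x i * starRingEnd ℂ (x j)

lemma outer_posSemidef (x : n → ℂ) : (outer x).PosSemidef := by
  refine Matrix.posSemidef_iff_dotProduct_mulVec.mpr ⟨?_, ?_⟩
  · ext i j
    simp only [outer, conjTranspose_apply, of_apply, star_mul', RingHomCompTriple.comp_apply,
      RingHom.id_apply, RCLike.star_def, Complex.conj_conj]
    ring
  · intro z
    have h1 : star z ⬝ᵥ (outer x) *ᵥ z =
        starRingEnd ℂ (∑ j, starRingEnd ℂ (x j) * z j) * (∑ j, starRingEnd ℂ (x j) * z j) := by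
      simp only [dotProduct, mulVec, outer, of_apply, Pi.star_apply, RCLike.star_def, map_sum,
        _root_.map_mul, Complex.conj_conj, Finset.sum_mul, Finset.mul_sum]
      rw [Finset.sum_comm]
      refine Finset.sum_congr rfl fun i _ => Finset.sum_congr rfl fun j _ => ?_
      ring
    rw [h1, mul_comm, Complex.mul_conj]
    exact Complex.zero_le_real.mpr (Complex.normSq_nonneg _)

lemma outer_trace (x : n → ℂ) : (outer x).trace = ((∑ i, Complex.normSq (x i) : ℝ) : ℂ) := by
  simp [outer, Matrix.trace, Matrix.diag, Complex.mul_conj]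

open Classical in
/-- Normalization of a vector, with a default unit vector for `0`. -/
noncomputable def nzd [Nonempty n] (x : n → ℂ) : n → ℂ :=
  if x = 0 then (fun i => if i = Classical.arbitrary n then 1 else 0)
  else (Real.sqrt (∑ i, Complex.normSq (x i)))⁻¹ • x

lemma sum_normSq_pos {x : n → ℂ} (hx : x ≠ 0) : 0 < ∑ i, Complex.normSq (x i) := by
  obtain ⟨i, hi⟩ := Function.ne_iff.mp hx
  refine Finset.sum_pos' (fun _ _ => Complex.normSq_nonneg _) ⟨i, Finset.mem_univ i, ?_⟩
  exact Complex.normSq_pos.mpr hi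

lemma nzd_normSq [Nonempty n] (x : n → ℂ) : ∑ i, Complex.normSq (nzd x i) = 1 := by
  rw [nzd]
  split_ifs with h
  · rw [Finset.sum_eq_single (Classical.arbitrary n)] <;> simp +contextual
  · have hN := sum_normSq_pos h
    set N := ∑ i, Complex.normSq (x i) with hNdef
    have : ∀ i, Complex.normSq ((Real.sqrt N)⁻¹ • x i) = N⁻¹ * Complex.normSq (x i) := by
      intro i
      rw [Complex.real_smul, Complex.normSq_mul, Complex.normSq_ofReal,
        ← Real.sqrt_inv, Real.mul_self_sqrt (by positivity)]
    simp only [Pi.smul_apply, this, ← Finset.mul_sum]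
    exact inv_mul_cancel₀ hN.ne'

lemma nzd_mul [Nonempty n] (x : n → ℂ) (w : ℝ) (a b : n) :
    ((w * ∑ i, Complex.normSq (x i) : ℝ) : ℂ) * (nzd x a * starRingEnd ℂ (nzd x b)) =
    (w : ℂ) * (x a * starRingEnd ℂ (x b)) := by
  rw [nzd]
  split_ifs with h
  · simp [h]
  · have hN := sum_normSq_pos h
    set N := ∑ i, Complex.normSq (x i) with hNdef
    have h1 : ((Real.sqrt N)⁻¹ • x a) * starRingEnd ℂ ((Real.sqrt N)⁻¹ • x b)
        = ((N⁻¹ : ℝ) : ℂ) * (x a * starRingEnd ℂ (x b)) := by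
      have h2 : ((Real.sqrt N)⁻¹ : ℝ) * (Real.sqrt N)⁻¹ = N⁻¹ := by
        rw [← Real.sqrt_inv, Real.mul_self_sqrt (by positivity)]
      simp only [Complex.real_smul, _root_.map_mul, Complex.conj_ofReal]
      rw [← h2]
      push_cast
      ring
    simp only [Pi.smul_apply] at h1 ⊢
    rw [h1, ← mul_assoc, ← Complex.ofReal_mul, mul_assoc w, mul_inv_cancel₀ hN.ne', mul_one]

lemma psd_decomp {M : Matrix n n ℂ} (hM : M.PosSemidef) :
    ∃ c : n → n → ℂ, ∀ a b, M a b = ∑ k, c k a * starRingEnd ℂ (c k b) := by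
  obtain ⟨B, hB⟩ : ∃ B : Matrix n n ℂ, M = B.conjTranspose * B := by
    classical
    open scoped MatrixOrder in exact CStarAlgebra.nonneg_iff_eq_star_mul_self.mp hM.nonneg
  refine ⟨fun k i => starRingEnd ℂ (B k i), fun a b => ?_⟩
  rw [hB]
  simp only [Matrix.mul_apply, Matrix.conjTranspose_apply, RCLike.star_def, Complex.conj_conj]

lemma psd_trace_aux {M : Matrix n n ℂ} (hM : M.PosSemidef) :
    ∃ r : ℝ, 0 ≤ r ∧ ∑ a, M a a = (r : ℂ) := by
  obtain ⟨c, hc⟩ := psd_decomp hM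
  refine ⟨∑ a, ∑ k, Complex.normSq (c k a),
    Finset.sum_nonneg fun _ _ => Finset.sum_nonneg fun _ _ => Complex.normSq_nonneg _, ?_⟩
  push_cast
  simp only [hc, Complex.mul_conj]

lemma psd_sum_diag_zero {M : Matrix n n ℂ} (hM : M.PosSemidef)
    (h : ∑ a, M a a = 0) : M = 0 := by
  obtain ⟨c, hc⟩ := psd_decomp hM
  have h2 : (↑(∑ a, ∑ k, Complex.normSq (c k a)) : ℂ) = 0 := by
    rw [← h]
    push_cast
    simp only [hc, Complex.mul_conj]
  have h3 : ∑ a, ∑ k, Complex.normSq (c k a) = 0 := by exact_mod_cast h2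
  have h4 : ∀ a k, c k a = 0 := by
    intro a k
    have := (Finset.sum_eq_zero_iff_of_nonneg fun _ _ =>
      Finset.sum_nonneg fun _ _ => Complex.normSq_nonneg _).mp h3 a (Finset.mem_univ a)
    have := (Finset.sum_eq_zero_iff_of_nonneg fun _ _ =>
      Complex.normSq_nonneg _).mp this k (Finset.mem_univ k)
    exact Complex.normSq_eq_zero.mp this
  ext a b
  rw [hc]
  simp [h4]

lemma kronSep_of {I J : Type*} [Fintype I] [Fintype J] [Nonempty I] [Nonempty J]
    (σ : Matrix (I × J) (I × J) ℂ) (htr : σ.trace = 1)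
    {T : Type*} [Fintype T] (w : T → ℝ) (x : T → I → ℂ) (y : T → J → ℂ)
    (hw : ∀ t, 0 ≤ w t)
    (hσ : ∀ a b, σ a b = ∑ t, (w t : ℂ) *
      ((x t a.1 * y t a.2) * starRingEnd ℂ (x t b.1 * y t b.2))) :
    KronSep σ := by
  classical
  have key : ∀ t (a b : I × J),
      ((w t * ((∑ i, Complex.normSq (x t i)) * (∑ j, Complex.normSq (y t j))) : ℝ) : ℂ) *
        ((outer (nzd (x t)) ⊗ₖ outer (nzd (y t))) a b) =
      (w t : ℂ) * ((x t a.1 * y t a.2) * starRingEnd ℂ (x t b.1 * y t b.2)) := by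
    intro t a b
    have h1 := nzd_mul (x t) (w t * ∑ j, Complex.normSq (y t j)) a.1 b.1
    have h2 := nzd_mul (y t) (w t) a.2 b.2
    calc ((w t * ((∑ i, Complex.normSq (x t i)) * (∑ j, Complex.normSq (y t j))) : ℝ) : ℂ) *
        ((outer (nzd (x t)) ⊗ₖ outer (nzd (y t))) a b)
        = (((w t * ∑ j, Complex.normSq (y t j)) * ∑ i, Complex.normSq (x t i) : ℝ) : ℂ) *
            (nzd (x t) a.1 * starRingEnd ℂ (nzd (x t) b.1)) *
            (nzd (y t) a.2 * starRingEnd ℂ (nzd (y t) b.2)) := by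
          simp only [kroneckerMap_apply, outer, of_apply]
          push_cast
          ring
      _ = ((w t * ∑ j, Complex.normSq (y t j) : ℝ) : ℂ) *
            (x t a.1 * starRingEnd ℂ (x t b.1)) *
            (nzd (y t) a.2 * starRingEnd ℂ (nzd (y t) b.2)) := by rw [h1]
      _ = ((w t * ∑ j, Complex.normSq (y t j) : ℝ) : ℂ) *
            (nzd (y t) a.2 * starRingEnd ℂ (nzd (y t) b.2)) *
            (x t a.1 * starRingEnd ℂ (x t b.1)) := by ring
      _ = (w t : ℂ) * (y t a.2 * starRingEnd ℂ (y t b.2)) *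
            (x t a.1 * starRingEnd ℂ (x t b.1)) := by rw [h2]
      _ = (w t : ℂ) * ((x t a.1 * y t a.2) * starRingEnd ℂ (x t b.1 * y t b.2)) := by
          simp only [_root_.map_mul]
          ring
  have hsum : ∑ t, w t * ((∑ i, Complex.normSq (x t i)) * (∑ j, Complex.normSq (y t j))) = 1 := by
    have tr2 : σ.trace = ((∑ t, w t * ((∑ i, Complex.normSq (x t i)) *
        (∑ j, Complex.normSq (y t j))) : ℝ) : ℂ) := by
      rw [Matrix.trace]
      simp only [Matrix.diag]
      rw [Finset.sum_congr rfl fun a _ => hσ a a, Finset.sum_comm]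
      push_cast
      refine Finset.sum_congr rfl fun t _ => ?_
      rw [Finset.sum_mul_sum]
      rw [Fintype.sum_prod_type]
      push_cast
      simp only [Complex.mul_conj, Complex.normSq_mul]
      push_cast
      simp only [Finset.mul_sum]
    rw [tr2] at htr
    exact_mod_cast htr
  obtain ⟨e⟩ : Nonempty (T ≃ Fin (Fintype.card T)) := ⟨Fintype.equivFin T⟩
  refine ⟨Fintype.card T,
    fun s => w (e.symm s) * ((∑ i, Complex.normSq (x (e.symm s) i)) *
      (∑ j, Complex.normSq (y (e.symm s) j))),
    fun s => outer (nzd (x (e.symm s))), fun s => outer (nzd (y (e.symm s))),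
    fun s => mul_nonneg (hw _) (mul_nonneg (Finset.sum_nonneg fun _ _ => Complex.normSq_nonneg _)
      (Finset.sum_nonneg fun _ _ => Complex.normSq_nonneg _)),
    ?_, ?_, ?_, ?_⟩
  · rw [← hsum]
    exact Fintype.sum_equiv e.symm _ _ fun s => rfl
  · exact fun s => ⟨outer_posSemidef _, by rw [outer_trace, nzd_normSq]; norm_num⟩
  · exact fun s => ⟨outer_posSemidef _, by rw [outer_trace, nzd_normSq]; norm_num⟩
  · ext a b
    rw [hσ a b, ← Equiv.sum_comp e.symm
      (fun t => (w t : ℂ) * ((x t a.1 * y t a.2) * starRingEnd ℂ (x t b.1 * y t b.2)))]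
    rw [Matrix.sum_apply]
    refine Finset.sum_congr rfl fun s _ => ?_
    rw [Matrix.smul_apply, smul_eq_mul]
    exact (key (e.symm s) a b).symm

open Classical in
/-- Embedding of a product vector into a single block of the sigma type. -/
noncomputable def embed {K : Type*} {I J : K → Type*} (κ : K)
    (f : I κ → ℂ) (g : J κ → ℂ) : ((κ' : K) × (I κ' × J κ')) → ℂ :=
  fun a => if h : a.1 = κ then f (cast (congrArg I h) a.2.1) * g (cast (congrArg J h) a.2.2) else 0

lemma embed_same {K : Type*} {I J : K → Type*} (κ : K) (f : I κ → ℂ) (g : J κ → ℂ)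
    (i : I κ) (j : J κ) : embed κ f g ⟨κ, (i, j)⟩ = f i * g j := by
  simp [embed]

lemma embed_ne {K : Type*} {I J : K → Type*} (κ : K) (f : I κ → ℂ) (g : J κ → ℂ)
    {κ' : K} (h : κ' ≠ κ) (b : I κ' × J κ') : embed κ f g ⟨κ', b⟩ = 0 := by
  simp [embed, h]

section BS
variable {K : Type*} [Fintype K] [Nonempty K] {I J : K → Type*}
    [∀ κ, Fintype (I κ)] [∀ κ, Nonempty (I κ)]
    [∀ κ, Fintype (J κ)] [∀ κ, Nonempty (J κ)]

lemma blockSep_of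
    (ρ : Matrix ((κ : K) × (I κ × J κ)) ((κ : K) × (I κ × J κ)) ℂ) (htr : ρ.trace = 1)
    {T : Type*} [Fintype T] (w : T → ℝ) (u : T → ((κ : K) × (I κ × J κ)) → ℂ)
    (hw : ∀ t, 0 ≤ w t)
    (hsupp : ∀ t, ∃ (κ : K) (x : I κ → ℂ) (y : J κ → ℂ),
      (∀ (i : I κ) (j : J κ), u t ⟨κ, (i, j)⟩ = x i * y j) ∧
      (∀ κ' : K, κ' ≠ κ → ∀ b : I κ' × J κ', u t ⟨κ', b⟩ = 0))
    (hρ : ρ = ∑ t, (w t : ℂ) • Matrix.of (fun a b => u t a * starRingEnd ℂ (u t b))) :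
    BlockSep ρ := by
  classical
  haveI : Nonempty ((κ : K) × (I κ × J κ)) :=
    ⟨⟨Classical.arbitrary K, Classical.arbitrary _⟩⟩
  have hsum : ∑ t, w t * (∑ a, Complex.normSq (u t a)) = 1 := by
    have tr2 : ρ.trace = ((∑ t, w t * (∑ a, Complex.normSq (u t a)) : ℝ) : ℂ) := by
      rw [hρ, Matrix.trace_sum]
      push_cast
      refine Finset.sum_congr rfl fun t _ => ?_
      rw [Matrix.trace_smul]
      rw [show (Matrix.of fun a b => u t a * starRingEnd ℂ (u t b)).trace
        = ((∑ a, Complex.normSq (u t a) : ℝ) : ℂ) by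
          simp [Matrix.trace, Matrix.diag, Complex.mul_conj]]
      push_cast
      simp [smul_eq_mul]
    rw [tr2] at htr
    exact_mod_cast htr
  have key : ∀ t, ((w t * ∑ a, Complex.normSq (u t a) : ℝ) : ℂ) •
      Matrix.of (fun a b => nzd (u t) a * starRingEnd ℂ (nzd (u t) b)) =
      (w t : ℂ) • Matrix.of (fun a b => u t a * starRingEnd ℂ (u t b)) := by
    intro t
    ext a b
    simp only [Matrix.smul_apply, Matrix.of_apply, smul_eq_mul]
    exact nzd_mul (u t) (w t) a b
  have hsupp' : ∀ t, ∃ (κ : K) (x : I κ → ℂ) (y : J κ → ℂ),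
      (∀ (i : I κ) (j : J κ), nzd (u t) ⟨κ, (i, j)⟩ = x i * y j) ∧
      (∀ κ' : K, κ' ≠ κ → ∀ b : I κ' × J κ', nzd (u t) ⟨κ', b⟩ = 0) := by
    intro t
    by_cases h : u t = 0
    · rcases hω : (Classical.arbitrary ((κ : K) × (I κ × J κ))) with ⟨κ0, i0, j0⟩
      refine ⟨κ0, fun i => if i = i0 then 1 else 0, fun j => if j = j0 then 1 else 0, ?_, ?_⟩
      · intro i j
        simp only [nzd, if_pos h]
        rw [hω]
        by_cases hi : i = i0 <;> by_cases hj : j = j0 <;> simp [Sigma.mk.inj_iff, hi, hj]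
      · intro κ' hκ' b
        simp only [nzd, if_pos h]
        rw [hω, if_neg]
        intro heq
        exact hκ' (congrArg Sigma.fst heq)
    · obtain ⟨κ, x, y, hxy, hz⟩ := hsupp t
      refine ⟨κ, fun i => ((Real.sqrt (∑ a, Complex.normSq (u t a)))⁻¹ : ℂ) * x i, y, ?_, ?_⟩
      · intro i j
        rw [nzd, if_neg h]
        simp only [Pi.smul_apply, Complex.real_smul, hxy]
        push_cast
        ring
      · intro κ' hκ' b
        rw [nzd, if_neg h]
        simp only [Pi.smul_apply, hz κ' hκ' b, smul_zero]
  obtain ⟨e⟩ : Nonempty (T ≃ Fin (Fintype.card T)) := ⟨Fintype.equivFin T⟩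
  refine ⟨Fintype.card T,
    fun s => w (e.symm s) * ∑ a, Complex.normSq (u (e.symm s) a),
    fun s => nzd (u (e.symm s)),
    fun s => mul_nonneg (hw _) (Finset.sum_nonneg fun _ _ => Complex.normSq_nonneg _),
    ?_, fun s => nzd_normSq _, fun s => hsupp' _, ?_⟩
  · rw [← hsum]
    exact Fintype.sum_equiv e.symm _ _ fun s => rfl
  · rw [hρ, ← Equiv.sum_comp e.symm
      (fun t => (w t : ℂ) • Matrix.of (fun a b => u t a * starRingEnd ℂ (u t b)))]
    exact Finset.sum_congr rfl fun s _ => (key (e.symm s)).symm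

end BS

end BlockSepAux
open BlockSepAux in
/-- paper's Proposition 3: a state on `Ω = Σ κ, I κ × J κ` is
block-separable if and only if it is block diagonal and each normalized nonzero
diagonal block is Kronecker-separable. -/
theorem block_separability_characterization
    {K : Type*} [Fintype K] [Nonempty K] {I J : K → Type*}
    [∀ κ, Fintype (I κ)] [∀ κ, Nonempty (I κ)]
    [∀ κ, Fintype (J κ)] [∀ κ, Nonempty (J κ)]
    (ρ : Matrix ((κ : K) × (I κ × J κ)) ((κ : K) × (I κ × J κ)) ℂ)
    (hpsd : ρ.PosSemidef) (htr : ρ.trace = 1) :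
    BlockSep ρ ↔
      ((∀ (κ κ' : K) (a : I κ × J κ) (b : I κ' × J κ'),
          κ ≠ κ' → ρ ⟨κ, a⟩ ⟨κ', b⟩ = 0) ∧
        ∀ κ : K, (∑ a : I κ × J κ, ρ ⟨κ, a⟩ ⟨κ, a⟩) ≠ 0 →
          KronSep (Matrix.of fun a b : I κ × J κ =>
            ρ ⟨κ, a⟩ ⟨κ, b⟩ / (∑ c : I κ × J κ, ρ ⟨κ, c⟩ ⟨κ, c⟩))) := by
  classical
  constructor
  · rintro ⟨n, lam, v, hlam, hsum1, hnorm, hform, hρ⟩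
    constructor
    · intro κ κ' a b hne
      rw [hρ]
      simp only [Matrix.sum_apply, Matrix.smul_apply, Matrix.of_apply, smul_eq_mul]
      refine Finset.sum_eq_zero fun t _ => ?_
      obtain ⟨κt, x, y, hxy, hz⟩ := hform t
      by_cases hk : κt = κ
      · subst hk
        rw [hz κ' (fun hh => hne hh.symm)]
        simp
      · rw [hz κ (Ne.symm hk)]
        simp
    · intro κ hp
      obtain ⟨r, hr0, hrp⟩ := psd_trace_aux (hpsd.submatrix (Sigma.mk κ))
      simp only [Matrix.submatrix_apply] at hrp
      have hr : r ≠ 0 := by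
        intro h
        rw [h] at hrp
        exact hp (by exact_mod_cast hrp)
      have hrpos : 0 < r := lt_of_le_of_ne hr0 (Ne.symm hr)
      have hXY : ∀ t, ∃ (X : I κ → ℂ) (Y : J κ → ℂ),
          ∀ i j, v t ⟨κ, (i, j)⟩ = X i * Y j := by
        intro t
        obtain ⟨κt, x, y, hxy, hz⟩ := hform t
        by_cases hk : κt = κ
        · subst hk
          exact ⟨x, y, hxy⟩
        · exact ⟨0, 0, fun i j => by rw [hz κ (Ne.symm hk)]; simp⟩
      choose X Y hXY using hXY
      refine kronSep_of _ ?_ (fun t => lam t / r) X Y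
        (fun t => div_nonneg (hlam t) hrpos.le) ?_
      · rw [Matrix.trace]
        simp only [Matrix.diag_apply, Matrix.of_apply]
        rw [← Finset.sum_div, div_self hp]
      · intro a b
        obtain ⟨i, j⟩ := a
        obtain ⟨i', j'⟩ := b
        simp only [Matrix.of_apply]
        rw [hrp, hρ]
        simp only [Matrix.sum_apply, Matrix.smul_apply, Matrix.of_apply, smul_eq_mul]
        rw [Finset.sum_div]
        refine Finset.sum_congr rfl fun t _ => ?_
        rw [hXY t i j, hXY t i' j', Complex.ofReal_div]
        ring
  · rintro ⟨hbd, hks⟩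
    have hblock : ∀ κ : K, ∃ (m : ℕ) (w : Fin m → ℝ) (X : Fin m → I κ → ℂ)
        (Y : Fin m → J κ → ℂ), (∀ s, 0 ≤ w s) ∧
        ∀ (i : I κ) (j : J κ) (i' : I κ) (j' : J κ),
          ρ ⟨κ, (i, j)⟩ ⟨κ, (i', j')⟩ =
            ∑ s, (w s : ℂ) * ((X s i * Y s j) * starRingEnd ℂ (X s i' * Y s j')) := by
      intro κ
      by_cases hp : (∑ c : I κ × J κ, ρ ⟨κ, c⟩ ⟨κ, c⟩) = 0
      · have hz : ρ.submatrix (Sigma.mk κ) (Sigma.mk κ) = 0 :=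
          psd_sum_diag_zero (hpsd.submatrix (Sigma.mk κ)) (by simpa using hp)
        refine ⟨0, Fin.elim0, Fin.elim0, Fin.elim0, fun s => s.elim0, fun i j i' j' => ?_⟩
        have h0 := congrFun (congrFun hz (i, j)) (i', j')
        simp only [Matrix.submatrix_apply, Matrix.zero_apply] at h0
        rw [h0]
        simp
      · obtain ⟨m, μ, A, B, hμ, hμ1, hApos, hBpos, hAB⟩ := hks κ hp
        obtain ⟨r, hr0, hrp⟩ := psd_trace_aux (hpsd.submatrix (Sigma.mk κ))
        simp only [Matrix.submatrix_apply] at hrp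
        have hr : r ≠ 0 := by
          intro h
          rw [h] at hrp
          exact hp (by exact_mod_cast hrp)
        have hrC : (r : ℂ) ≠ 0 := Complex.ofReal_ne_zero.mpr hr
        have hcA := fun t => psd_decomp (hApos t).1
        choose cA hcA using hcA
        have hcB := fun t => psd_decomp (hBpos t).1
        choose cB hcB using hcB
        obtain ⟨e⟩ : Nonempty ((Fin m × (I κ × J κ)) ≃
            Fin (Fintype.card (Fin m × (I κ × J κ)))) := ⟨Fintype.equivFin _⟩
        refine ⟨Fintype.card (Fin m × (I κ × J κ)),
          fun s => r * μ (e.symm s).1,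
          fun s => cA (e.symm s).1 (e.symm s).2.1,
          fun s => cB (e.symm s).1 (e.symm s).2.2,
          fun s => mul_nonneg hr0 (hμ _), ?_⟩
        intro i j i' j'
        beta_reduce
        rw [Equiv.sum_comp e.symm (fun s : Fin m × (I κ × J κ) =>
          ((r * μ s.1 : ℝ) : ℂ) * ((cA s.1 s.2.1 i * cB s.1 s.2.2 j) *
            starRingEnd ℂ (cA s.1 s.2.1 i' * cB s.1 s.2.2 j')))]
        
        have hent : ρ ⟨κ, (i, j)⟩ ⟨κ, (i', j')⟩ =
            (r : ℂ) * ((∑ t, (μ t : ℂ) • (A t ⊗ₖ B t)) (i, j) (i', j')) := by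
          have h0 := congrFun (congrFun hAB (i, j)) (i', j')
          simp only [Matrix.of_apply] at h0
          rw [hrp, div_eq_iff hrC] at h0
          rw [h0, mul_comm]
        rw [hent]
        simp only [Matrix.sum_apply, Matrix.smul_apply, Matrix.kroneckerMap_apply,
          smul_eq_mul]
        rw [Finset.mul_sum, Fintype.sum_prod_type]
        refine Finset.sum_congr rfl fun t _ => ?_
        rw [hcA t i i', hcB t j j', Fintype.sum_prod_type, Finset.sum_mul_sum]
        simp only [Finset.mul_sum]
        refine Finset.sum_congr rfl fun k _ => Finset.sum_congr rfl fun l _ => ?_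
        simp only [_root_.map_mul]
        push_cast
        ring
    choose m w X Y hw hXY using hblock
    refine blockSep_of ρ htr (T := (κ : K) × Fin (m κ))
      (fun s => w s.1 s.2) (fun s => embed s.1 (X s.1 s.2) (Y s.1 s.2))
      (fun s => hw s.1 s.2)
      (fun s => ⟨s.1, X s.1 s.2, Y s.1 s.2, fun i j => embed_same _ _ _ i j,
        fun κ' h b => embed_ne _ _ _ h b⟩) ?_
    ext ⟨κ1, a⟩ ⟨κ2, b⟩
    simp only [Matrix.sum_apply, Matrix.smul_apply, Matrix.of_apply, smul_eq_mul]
    rw [← Finset.univ_sigma_univ, Finset.sum_sigma]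
    by_cases h12 : κ1 = κ2
    · subst h12
      obtain ⟨i, j⟩ := a
      obtain ⟨i', j'⟩ := b
      rw [hXY κ1 i j i' j']
      rw [Finset.sum_eq_single κ1]
      · refine Finset.sum_congr rfl fun s _ => ?_
        rw [embed_same, embed_same]
      · intro κ' _ hκ'
        refine Finset.sum_eq_zero fun s _ => ?_
        rw [embed_ne _ _ _ (Ne.symm hκ')]
        simp
      · intro h
        exact absurd (Finset.mem_univ κ1) h
    · rw [hbd κ1 κ2 a b h12]
      refine (Finset.sum_eq_zero fun κ' _ => Finset.sum_eq_zero fun s _ => ?_).symm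
      by_cases hk : κ1 = κ'
      · rw [embed_ne _ _ _ (show κ2 ≠ κ' from fun hh => h12 (hk.trans hh.symm)) b]
        simp
      · rw [embed_ne _ _ _ hk a]
        simp
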